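/- Let b : ℝ≥0 → Set P be non-Berkeley for δ, and let φ be a propositional formula. If ⇑(φ) holds at t (φ switches from false to true at t), then for all s ∈ (t, t+δ), φ holds at s; and for all s ∈ (max(t−δ,0), t), φ does not hold at s. In particular, □_{=δ}(φ) evaluated at any point of (t−δ, t) yields a point in (t, t+δ) where φ holds. -/

import Mathlib

open Set

/-- A behavior `b : ℝ≥0 → Set P` is non-Berkeley for `δ`. -/
def NonBerkeley {P : Type*} (b : ℝ → Set P) (δ : ℝ) : Prop :=
  ∀ t : ℝ, 0 ≤ t → ∃ u : ℝ, 0 ≤ u ∧ u ≤ t ∧ t ≤ u + δ ∧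
    ∀ s₁ ∈ Icc u (u + δ), ∀ s₂ ∈ Icc u (u + δ), b s₁ = b s₂

/-- `⇑(φ)` for a propositional (state) formula `φ`: `φ` is false on a punctured left
neighborhood of `t` and true on a punctured right neighborhood of `t`. -/
def BecomesF {P : Type*} (b : ℝ → Set P) (φ : Set P → Prop) (t : ℝ) : Prop :=
  ∃ ε > 0, (∀ r, t - ε < r → r < t → ¬ φ (b r)) ∧ (∀ r, t < r → r < t + ε → φ (b r))

/-- If `⇑(φ)` holds at `t` then `φ` holds throughout `(t, t+δ)` and fails throughout
`(max(t-δ,0), t)`; in particular `□_{=δ}(φ)` evaluated at any point `s ∈ (t-δ, t)`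
yields the point `s+δ ∈ (t, t+δ)` where `φ` holds. -/
theorem becomes_spread {P : Type*} (b : ℝ → Set P) (δ : ℝ) (hδ : 0 < δ)
    (hb : NonBerkeley b δ) (φ : Set P → Prop) (t : ℝ) (ht : 0 < t)
    (hbec : BecomesF b φ t) :
    (∀ s, t < s → s < t + δ → φ (b s)) ∧
    (∀ s, max (t - δ) 0 < s → s < t → ¬ φ (b s)) ∧
    (∀ s, t - δ < s → s < t → φ (b (s + δ))) := by
  obtain ⟨ε, hε, hL, hR⟩ := hbec
  have hm : 0 < min ε δ := lt_min hε hδ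
  have hme : min ε δ ≤ ε := min_le_left _ _
  have hmd : min ε δ ≤ δ := min_le_right _ _
  -- right part
  have hpos : ∀ s, t < s → s < t + δ → φ (b s) := by
    set t2 := t + min ε δ / 2 with ht2
    clear_value t2
    have ht2t : t < t2 := by linarith
    have hφt2 : φ (b t2) := hR t2 ht2t (by linarith)
    obtain ⟨u, hu0, hu1, hu2, hconst⟩ := hb t2 (by linarith)
    have htu : t ≤ u := by
      by_contra h
      push_neg at h
      set r := (max u (t - ε) + t) / 2 with hr
      clear_value r
      have hmax : max u (t - ε) < t := max_lt h (by linarith)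
      have hxu : u ≤ max u (t - ε) := le_max_left _ _
      have hxe : t - ε ≤ max u (t - ε) := le_max_right _ _
      have hr1 : r < t := by linarith
      have hr2 : t - ε < r := by linarith
      have hru : u ≤ r := by linarith
      have hr3 : r ≤ u + δ := by linarith
      have heq : b r = b t2 := hconst r ⟨hru, hr3⟩ t2 ⟨hu1, hu2⟩
      exact hL r hr2 hr1 (heq ▸ hφt2)
    intro s hs1 hs2
    rcases le_or_gt u s with h | h
    · have heq : b s = b t2 := hconst s ⟨h, by linarith⟩ t2 ⟨hu1, hu2⟩
      rw [heq]; exact hφt2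
    · exact hR s hs1 (by linarith)
  refine ⟨hpos, ?_, fun s h1 h2 => hpos (s + δ) (by linarith) (by linarith)⟩
  set m := min (min ε δ) t with hmdef
  have hm2 : 0 < m := lt_min hm ht
  have hme2 : m ≤ ε := le_trans (min_le_left _ _) hme
  have hmt : m ≤ t := min_le_right _ _
  clear_value m
  set t3 := t - m / 2 with ht3
  clear_value t3
  have ht3t : t3 < t := by linarith
  have ht30 : 0 ≤ t3 := by linarith
  have hφt3 : ¬ φ (b t3) := hL t3 (by linarith) ht3t
  obtain ⟨u, hu0, hu1, hu2, hconst⟩ := hb t3 ht30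
  have hut : u + δ ≤ t := by
    by_contra h
    push_neg at h
    set r := (t + min (u + δ) (t + ε)) / 2 with hr
    clear_value r
    have h1 : t < min (u + δ) (t + ε) := lt_min h (by linarith)
    have hx1 : min (u + δ) (t + ε) ≤ t + ε := min_le_right _ _
    have hx2 : min (u + δ) (t + ε) ≤ u + δ := min_le_left _ _
    have hr1 : t < r := by linarith
    have hr2 : r < t + ε := by linarith
    have hr3 : r ≤ u + δ := by linarith
    have hru : u ≤ r := by linarith
    have heq : b r = b t3 := hconst r ⟨hru, hr3⟩ t3 ⟨hu1, hu2⟩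
    exact hφt3 (heq ▸ hR r hr1 hr2)
  intro s hs1 hs2
  have hs1' : t - δ < s := lt_of_le_of_lt (le_max_left _ _) hs1
  rcases le_or_gt s t3 with h | h
  · have heq : b s = b t3 := hconst s ⟨by linarith, by linarith⟩ t3 ⟨hu1, hu2⟩
    rw [heq]; exact hφt3
  · exact hL s (by linarith) hs2
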